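/- Let U = {u_1, ..., u_{2^m}} be a set of 2^m distinct nonzero vectors in F_2^n, let B : F_2^n → F_2^m be a uniformly random linear map, fix y ∈ F_2^m, and define Z_y = |{i : B u_i = y}|. Then for every integer r ≥ 0, with a = ⌈log_2(r+2)⌉, we have Pr[Z_y > r] ≤ (∏_{j=0}^{a-1} (r + 2 - 2^j))^{-1}. -/

import Mathlib

/-- The space of F_2-linear maps from F_2^n to F_2^m. -/
abbrev Lin (n m : ℕ) := (Fin n → ZMod 2) →ₗ[ZMod 2] (Fin m → ZMod 2)

lemma lin_finite (n m : ℕ) : Finite (Lin n m) :=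
  Finite.of_injective (fun B => (B : (Fin n → ZMod 2) → (Fin m → ZMod 2)))
    DFunLike.coe_injective

lemma fiber_count {n m a : ℕ} (v : Fin a → (Fin n → ZMod 2))
    (hv : LinearIndependent (ZMod 2) v) (w : Fin a → (Fin m → ZMod 2)) :
    Nat.card {B : Lin n m // ∀ j, B (v j) = w j} * 2 ^ (m * a) = Nat.card (Lin n m) := by
  haveI := lin_finite n m
  classical
  set L : Lin n m →ₗ[ZMod 2] (Fin a → (Fin m → ZMod 2)) :=
    LinearMap.pi (fun j => LinearMap.applyₗ (v j)) with hLdef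
  have hLapp : ∀ (B : Lin n m) j, L B j = B (v j) := fun B j => rfl
  have hsurj : Function.Surjective L := by
    intro t
    set f : (Fin a → ZMod 2) →ₗ[ZMod 2] (Fin n → ZMod 2) :=
      Fintype.linearCombination (ZMod 2) v with hfdef
    have hker : LinearMap.ker f = ⊥ := by
      rw [LinearMap.ker_eq_bot']
      intro c hc
      exact funext (Fintype.linearIndependent_iff.mp hv c
        (by simpa [hfdef, Fintype.linearCombination_apply] using hc))
    obtain ⟨g, hg⟩ := f.exists_leftInverse_of_injective hker
    set C : (Fin a → ZMod 2) →ₗ[ZMod 2] (Fin m → ZMod 2) :=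
      Fintype.linearCombination (ZMod 2) t with hCdef
    refine ⟨C ∘ₗ g, ?_⟩
    funext j
    have h1 : f (Pi.single j 1) = v j := by
      simp [hfdef, Fintype.linearCombination_apply, Pi.single_apply, ite_smul]
    have h2 : g (v j) = Pi.single j 1 := by
      rw [← h1]
      exact LinearMap.ext_iff.mp hg (Pi.single j 1)
    rw [hLapp]
    simp only [LinearMap.comp_apply, h2, hCdef]
    simp [Fintype.linearCombination_apply, Pi.single_apply, ite_smul]
  obtain ⟨B₀, hB₀⟩ := hsurj w
  have e1 : {B : Lin n m // ∀ j, B (v j) = w j} ≃ {B : Lin n m // L B = w} :=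
    Equiv.subtypeEquivRight (fun B => by
      constructor
      · intro h; funext j; rw [hLapp, h]
      · intro h j; rw [← hLapp, h])
  have e2 : {B : Lin n m // L B = w} ≃ L.toAddMonoidHom.ker :=
    { toFun := fun B => ⟨B.1 - B₀, by
        simp [AddMonoidHom.mem_ker, map_sub, B.2, hB₀]⟩
      invFun := fun K => ⟨K.1 + B₀, by
        have hK : L K.1 = 0 := AddMonoidHom.mem_ker.mp K.2
        rw [map_add, hK, hB₀, zero_add]⟩
      left_inv := fun B => by ext : 1; simp
      right_inv := fun K => by ext : 1; simp }
  rw [Nat.card_congr (e1.trans e2)]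
  have hq := AddSubgroup.card_eq_card_quotient_mul_card_addSubgroup L.toAddMonoidHom.ker
  have he : Nat.card (Lin n m ⧸ L.toAddMonoidHom.ker) =
      Nat.card (Fin a → (Fin m → ZMod 2)) :=
    Nat.card_congr (QuotientAddGroup.quotientKerEquivOfSurjective L.toAddMonoidHom hsurj).toEquiv
  have hc : Nat.card (Fin a → (Fin m → ZMod 2)) = 2 ^ (m * a) := by
    simp [Nat.card_eq_fintype_card, Fintype.card_fun, ZMod.card, ← pow_mul, mul_comm]
  rw [hq, he, hc, mul_comm]

lemma tuple_count {n N r : ℕ} (u : Fin N → (Fin n → ZMod 2)) (hu_inj : Function.Injective u)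
    (hu_ne : ∀ i, u i ≠ 0) (S : Finset (Fin N)) (hS : r + 1 ≤ S.card) :
    ∀ b : ℕ, (∀ j, j < b → 2 ^ j < r + 2) →
      ∃ T : Finset (Fin b → Fin N),
        (∀ i ∈ T, (∀ t, i t ∈ S) ∧ LinearIndependent (ZMod 2) (u ∘ i)) ∧
        ∏ j ∈ Finset.range b, (r + 2 - 2 ^ j) ≤ T.card := by
  classical
  intro b
  induction b with
  | zero =>
    intro _
    refine ⟨{fun t => t.elim0}, ?_, by simp⟩
    intro i _
    exact ⟨fun t => t.elim0, linearIndependent_empty_type⟩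
  | succ b ih =>
    intro hpow
    obtain ⟨T, hTmem, hTcard⟩ := ih (fun j hj => hpow j (hj.trans (Nat.lt_succ_self b)))
    set E : (Fin b → Fin N) → Finset (Fin N) := fun w =>
      S.filter (fun i => u i ∉ Submodule.span (ZMod 2) (Set.range (u ∘ w))) with hE
    have hEcard : ∀ w : Fin b → Fin N, r + 2 - 2 ^ b ≤ (E w).card := by
      intro w
      set W := Submodule.span (ZMod 2) (Set.range (u ∘ w)) with hW
      haveI : Fintype W := Fintype.ofFinite _
      have hfr : Module.finrank (ZMod 2) W ≤ b := by
        refine (finrank_span_le_card (R := ZMod 2) (Set.range (u ∘ w))).trans ?_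
        rw [Set.toFinset_range]
        exact Finset.card_image_le.trans (by simp)
      have hWcard : Fintype.card W ≤ 2 ^ b := by
        rw [Module.card_eq_pow_finrank (K := ZMod 2) (V := W), ZMod.card]
        exact Nat.pow_le_pow_right (by norm_num) hfr
      have hin : (S.filter (fun i => u i ∈ W)).card ≤ 2 ^ b - 1 := by
        have h1 : (S.filter (fun i => u i ∈ W)).card ≤
            ((W : Set (Fin n → ZMod 2)).toFinset.erase 0).card := by
          apply Finset.card_le_card_of_injOn u
          · intro i hi
            rw [Finset.mem_coe, Finset.mem_erase, Set.mem_toFinset]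
            exact ⟨hu_ne i, (Finset.mem_filter.mp hi).2⟩
          · exact fun i _ j _ h => hu_inj h
        refine h1.trans ?_
        have h0 : (0 : Fin n → ZMod 2) ∈ (W : Set (Fin n → ZMod 2)).toFinset := by
          rw [Set.mem_toFinset]; exact W.zero_mem
        rw [Finset.card_erase_of_mem h0, Set.toFinset_card]
        have hcc : Fintype.card ((W : Set (Fin n → ZMod 2)) : Type _) = Fintype.card W :=
          Fintype.card_congr (Equiv.subtypeEquivRight (fun x => Iff.rfl))
        omega
      have hsplit := Finset.card_filter_add_card_filter_not
        (s := S) (p := fun i => u i ∈ W)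
      have h2b : 2 ^ b < r + 2 := hpow b (Nat.lt_succ_self b)
      have h2b1 : 1 ≤ 2 ^ b := Nat.one_le_two_pow
      have hEeq : (E w).card = (S.filter (fun i => ¬ u i ∈ W)).card := by
        rw [hE]
      omega
    have hinj : Set.InjOn (fun p : (Σ _ : Fin b → Fin N, Fin N) =>
        (Fin.snoc p.1 p.2 : Fin (b + 1) → Fin N)) (T.sigma (fun w => E w)) := by
      intro p _ q _ h
      simp only at h
      have h1 : p.2 = q.2 := by simpa using congrFun h (Fin.last b)
      have h2 : p.1 = q.1 := by
        funext t
        simpa using congrFun h t.castSucc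
      exact Sigma.ext h2 (heq_of_eq h1)
    refine ⟨(T.sigma (fun w => E w)).image (fun p => Fin.snoc p.1 p.2), ?_, ?_⟩
    · intro i hi
      rw [Finset.mem_image] at hi
      obtain ⟨p, hp, rfl⟩ := hi
      rw [Finset.mem_sigma] at hp
      obtain ⟨hw, hi2⟩ := hp
      obtain ⟨hwS, hwind⟩ := hTmem p.1 hw
      rw [hE, Finset.mem_filter] at hi2
      obtain ⟨hiS, hinsp⟩ := hi2
      constructor
      · intro t
        refine Fin.lastCases ?_ ?_ t
        · rw [Fin.snoc_last]; exact hiS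
        · intro s; rw [Fin.snoc_castSucc]; exact hwS s
      · have hcomp : u ∘ (Fin.snoc p.1 p.2 : Fin (b + 1) → Fin N) =
            Fin.snoc (u ∘ p.1) (u p.2) := Fin.comp_snoc u p.1 p.2
        rw [hcomp, linearIndependent_fin_snoc]
        exact ⟨hwind, hinsp⟩
    · rw [Finset.card_image_of_injOn hinj, Finset.card_sigma, Finset.prod_range_succ]
      calc (∏ j ∈ Finset.range b, (r + 2 - 2 ^ j)) * (r + 2 - 2 ^ b)
          ≤ T.card * (r + 2 - 2 ^ b) := Nat.mul_le_mul_right _ hTcard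
        _ ≤ ∑ w ∈ T, (E w).card := by
            have := Finset.card_nsmul_le_sum T (fun w => (E w).card) (r + 2 - 2 ^ b)
              (fun w _ => hEcard w)
            simpa [smul_eq_mul, mul_comm] using this


/-- Let U = {u_1, ..., u_{2^m}} be a set of 2^m distinct nonzero vectors in F_2^n,
let B : F_2^n → F_2^m be a uniformly random linear map, fix y ∈ F_2^m, and define
Z_y = |{i : B u_i = y}|. Then for every integer r ≥ 0, with a = ⌈log_2(r+2)⌉, we have
Pr[Z_y > r] ≤ (∏_{j=0}^{a-1} (r + 2 - 2^j))^{-1}. -/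
theorem stmt_1 (n m : ℕ) (u : Fin (2 ^ m) → (Fin n → ZMod 2))
    (hu_inj : Function.Injective u) (hu_ne : ∀ i, u i ≠ 0)
    (y : Fin m → ZMod 2) (r : ℕ) (a : ℕ) (ha : a = Nat.clog 2 (r + 2)) :
    (Nat.card {B : Lin n m // r < Nat.card {i : Fin (2 ^ m) // B (u i) = y}} : ℝ) /
        (Nat.card (Lin n m) : ℝ) ≤
      ((∏ j ∈ Finset.range a, (r + 2 - 2 ^ j) : ℕ) : ℝ)⁻¹ := by
  classical
  haveI := lin_finite n m
  letI : Fintype (Lin n m) := Fintype.ofFinite _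
  have hpow : ∀ j, j < a → 2 ^ j < r + 2 := by
    intro j hj
    have h1 : 2 ^ j ≤ 2 ^ (a - 1) := Nat.pow_le_pow_right (by norm_num) (by omega)
    have h2 : 2 ^ (a - 1) < r + 2 := by
      rw [ha]
      exact Nat.pow_pred_clog_lt_self (b := 2) (x := r + 2) (by norm_num) (by omega)
    omega
  set P := ∏ j ∈ Finset.range a, (r + 2 - 2 ^ j) with hPdef
  have hPpos : 0 < P := Finset.prod_pos (fun j hj => by
    have := hpow j (Finset.mem_range.mp hj); omega)
  have hLpos : 0 < Nat.card (Lin n m) := Nat.card_pos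
  set X : Lin n m → ℕ := fun B => (Finset.univ.filter (fun i : Fin a → Fin (2 ^ m) =>
    (∀ t, B (u (i t)) = y) ∧ LinearIndependent (ZMod 2) (u ∘ i))).card with hX
  set bad : Finset (Lin n m) := Finset.univ.filter
    (fun B => r < Nat.card {i : Fin (2 ^ m) // B (u i) = y}) with hbad
  have hA : Nat.card {B : Lin n m // r < Nat.card {i : Fin (2 ^ m) // B (u i) = y}}
      = bad.card := by
    rw [Nat.card_eq_fintype_card, Fintype.card_subtype, hbad]
  have hB : ∀ B ∈ bad, P ≤ X B := by
    intro B hBmem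
    set S : Finset (Fin (2 ^ m)) := Finset.univ.filter (fun i => B (u i) = y) with hSdef
    have hScard : r + 1 ≤ S.card := by
      rw [hbad, Finset.mem_filter] at hBmem
      have h := hBmem.2
      rw [Nat.card_eq_fintype_card, Fintype.card_subtype] at h
      have : (Finset.filter (fun i => B (u i) = y) Finset.univ).card = S.card := by
        rw [hSdef]
      omega
    obtain ⟨T, hTmem, hTcard⟩ := tuple_count u hu_inj hu_ne S hScard a hpow
    refine hTcard.trans (Finset.card_le_card ?_)
    intro i hi
    obtain ⟨hiS, hind⟩ := hTmem i hi
    simp only [Finset.mem_filter, Finset.mem_univ, true_and]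
    refine ⟨fun t => ?_, hind⟩
    have := hiS t
    rw [hSdef, Finset.mem_filter] at this
    exact this.2
  have hC : ∑ B : Lin n m, X B ≤ Nat.card (Lin n m) := by
    have hswap : ∑ B : Lin n m, X B = ∑ i : Fin a → Fin (2 ^ m),
        (Finset.univ.filter (fun B : Lin n m =>
          (∀ t, B (u (i t)) = y) ∧ LinearIndependent (ZMod 2) (u ∘ i))).card := by
      simp only [hX, Finset.card_filter]
      exact Finset.sum_comm
    rw [hswap]
    have hterm : ∀ i : Fin a → Fin (2 ^ m),
        (Finset.univ.filter (fun B : Lin n m =>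
          (∀ t, B (u (i t)) = y) ∧ LinearIndependent (ZMod 2) (u ∘ i))).card
          ≤ Nat.card (Lin n m) / 2 ^ (m * a) := by
      intro i
      by_cases hind : LinearIndependent (ZMod 2) (u ∘ i)
      · have hfib := fiber_count (u ∘ i) hind (fun _ => y)
        have hcard : (Finset.univ.filter (fun B : Lin n m =>
            (∀ t, B (u (i t)) = y) ∧ LinearIndependent (ZMod 2) (u ∘ i))).card
            = Nat.card {B : Lin n m // ∀ j, B ((u ∘ i) j) = (fun _ => y) j} := by
          rw [← Fintype.card_subtype, ← Nat.card_eq_fintype_card]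
          exact Nat.card_congr (Equiv.subtypeEquivRight (fun B => by
            simp only [Function.comp_apply]
            exact ⟨fun h => h.1, fun h => ⟨h, hind⟩⟩))
        rw [hcard]
        refine (Nat.le_div_iff_mul_le (by positivity)).mpr ?_
        exact hfib.le
      · have hz : (Finset.univ.filter (fun B : Lin n m =>
            (∀ t, B (u (i t)) = y) ∧ LinearIndependent (ZMod 2) (u ∘ i))).card = 0 := by
          rw [Finset.card_eq_zero, Finset.filter_eq_empty_iff]
          exact fun _ _ h => hind h.2
        rw [hz]
        exact Nat.zero_le _
    calc ∑ i : Fin a → Fin (2 ^ m), (Finset.univ.filter (fun B : Lin n m =>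
          (∀ t, B (u (i t)) = y) ∧ LinearIndependent (ZMod 2) (u ∘ i))).card
        ≤ ∑ _i : Fin a → Fin (2 ^ m), Nat.card (Lin n m) / 2 ^ (m * a) :=
          Finset.sum_le_sum (fun i _ => hterm i)
      _ = 2 ^ (m * a) * (Nat.card (Lin n m) / 2 ^ (m * a)) := by
          rw [Finset.sum_const, smul_eq_mul]
          congr 1
          simp [Fintype.card_fun, ← pow_mul, mul_comm]
      _ ≤ Nat.card (Lin n m) := by
          rw [mul_comm]
          exact Nat.div_mul_le_self _ _
  have key : bad.card * P ≤ Nat.card (Lin n m) := by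
    calc bad.card * P ≤ ∑ B ∈ bad, X B := by
          have := Finset.card_nsmul_le_sum bad X P hB
          simpa [smul_eq_mul] using this
      _ ≤ ∑ B : Lin n m, X B :=
          Finset.sum_le_sum_of_subset (Finset.subset_univ bad)
      _ ≤ Nat.card (Lin n m) := hC
  rw [hA, div_le_iff₀ (by exact_mod_cast hLpos), inv_mul_eq_div,
    le_div_iff₀ (by exact_mod_cast hPpos)]
  exact_mod_cast key
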